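/- Let n ≥ 2, J ⊆ [n-1], and let x ∈ SL_n(ℂ) be a J-Toeplitz matrix. Then for each i ∈ [n-1], −((x ẇ_J)^{-1} f (x ẇ_J))_{i,i+1} equals 1 if i ∈ J and equals 0 if i ∉ J. -/
import Mathlib


open Matrix

attribute [local instance] Classical.propDecidable

noncomputable section

namespace PetersonPaper

/-- Zero above the diagonal: `M i j = 0` whenever `i < j` (lower triangular). -/
def lowerTri (n : ℕ) (M : Matrix (Fin n) (Fin n) ℂ) : Prop :=
  ∀ i j : Fin n, i < j → M i j = 0

/-- Zero below the diagonal: `M i j = 0` whenever `j < i` (upper triangular). -/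
def upperTri (n : ℕ) (M : Matrix (Fin n) (Fin n) ℂ) : Prop :=
  ∀ i j : Fin n, j < i → M i j = 0

/-- The regular nilpotent matrix `f`, with `(i,j)` entry `1` iff `i = j+1`. -/
def fMat (n : ℕ) : Matrix (Fin n) (Fin n) ℂ :=
  fun i j => if (i : ℕ) = (j : ℕ) + 1 then 1 else 0

/-- `Δ_i(g)`: the lower-right `(n-i)×(n-i)` minor of `g`.  Here `i : Fin (n-1)`
encodes the (1-based) index `i.1 + 1 ∈ {1,…,n-1}`. -/
def Delta (n : ℕ) (g : Matrix (Fin n) (Fin n) ℂ) (i : Fin (n-1)) : ℂ :=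
  (g.submatrix
    (fun k : Fin (n - (i.1 + 1)) => (⟨k.1 + (i.1 + 1), by have := k.isLt; omega⟩ : Fin n))
    (fun k : Fin (n - (i.1 + 1)) => (⟨k.1 + (i.1 + 1), by have := k.isLt; omega⟩ : Fin n))).det

/-- `q_i(g) = -(g⁻¹ f g)_{i,i+1}` (1-based indices; `i : Fin (n-1)` encodes `i.1+1`). -/
def qfun (n : ℕ) (g : Matrix (Fin n) (Fin n) ℂ) (i : Fin (n-1)) : ℂ :=
  -((g⁻¹ * fMat n * g) (⟨i.1, by have := i.isLt; omega⟩ : Fin n)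
      (⟨i.1 + 1, by have := i.isLt; omega⟩ : Fin n))

/-- The (0-based) gap `c` (between positions `c` and `c+1` of `Fin n`) belongs to
`J ⊆ [n-1]`; `c` encodes the 1-based element `c+1` of `[n-1]`. -/
def gapMem (n : ℕ) (J : Set (Fin (n-1))) (c : ℕ) : Prop :=
  ∃ h : c < n - 1, (⟨c, h⟩ : Fin (n-1)) ∈ J

/-- The (0-based) first position of the block of the partition of `{0,…,n-1}`
determined by `J` containing the position `p`. -/
def blockStart (n : ℕ) (J : Set (Fin (n-1))) (p : Fin n) : ℕ :=
  sInf {a : ℕ | a ≤ p.1 ∧ ∀ c : ℕ, a ≤ c → c < p.1 → gapMem n J c}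

/-- The (0-based) last position of the block of the partition of `{0,…,n-1}`
determined by `J` containing the position `p`. -/
def blockEnd (n : ℕ) (J : Set (Fin (n-1))) (p : Fin n) : ℕ :=
  sSup {b : ℕ | b < n ∧ p.1 ≤ b ∧ ∀ c : ℕ, p.1 ≤ c → c < b → gapMem n J c}

lemma blockStart_le (n : ℕ) (J : Set (Fin (n-1))) (p : Fin n) : blockStart n J p ≤ p.1 :=
  Nat.sInf_le ⟨le_refl _, fun c hc1 hc2 => absurd (lt_of_le_of_lt hc1 hc2) (lt_irrefl _)⟩

lemma blockEnd_mem (n : ℕ) (J : Set (Fin (n-1))) (p : Fin n) :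
    blockEnd n J p ∈ {b : ℕ | b < n ∧ p.1 ≤ b ∧ ∀ c : ℕ, p.1 ≤ c → c < b → gapMem n J c} :=
  Nat.sSup_mem
    ⟨p.1, p.isLt, le_refl _, fun c hc1 hc2 => absurd (lt_of_le_of_lt hc1 hc2) (lt_irrefl _)⟩
    ⟨n, fun _ hb => le_of_lt hb.1⟩

lemma blockEnd_lt (n : ℕ) (J : Set (Fin (n-1))) (p : Fin n) : blockEnd n J p < n :=
  (blockEnd_mem n J p).1

lemma le_blockEnd (n : ℕ) (J : Set (Fin (n-1))) (p : Fin n) : p.1 ≤ blockEnd n J p :=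
  (blockEnd_mem n J p).2.1

/-- The representative `ẇ_J` of the longest element of the Young subgroup determined
by `J ⊆ [n-1]`: block diagonal, with the antidiagonal matrix with entries
`(-1)^(row - blockStart)` on each block of the partition determined by `J`. -/
def wJ (n : ℕ) (J : Set (Fin (n-1))) : Matrix (Fin n) (Fin n) ℂ :=
  fun p q =>
    if (p : ℕ) + (q : ℕ) = blockStart n J p + blockEnd n J p
    then (-1 : ℂ) ^ ((p : ℕ) - blockStart n J p) else 0

/-- A `J`-Toeplitz matrix: block diagonal with respect to the partition determined by
`J`, each block being lower triangular Toeplitz with `1`'s on the diagonal. -/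
def IsJToeplitz (n : ℕ) (J : Set (Fin (n-1))) (x : Matrix (Fin n) (Fin n) ℂ) : Prop :=
  ∃ c : ℕ → ℕ → ℂ, (∀ a, c a 0 = 1) ∧
    ∀ p q : Fin n, x p q =
      if blockStart n J p = blockStart n J q ∧ (q : ℕ) ≤ (p : ℕ)
      then c (blockStart n J p) ((p : ℕ) - (q : ℕ)) else 0

/-- `g ∈ B⁺ ẇ_K B⁻` (at the level of matrices of determinant 1). -/
def inBruhatPlus (n : ℕ) (K : Set (Fin (n-1))) (g : Matrix (Fin n) (Fin n) ℂ) : Prop :=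
  ∃ b₁ b₂ : Matrix (Fin n) (Fin n) ℂ,
    b₁.det = 1 ∧ b₂.det = 1 ∧ upperTri n b₁ ∧ lowerTri n b₂ ∧ g = b₁ * wJ n K * b₂

/-- `g ∈ B⁻ ẇ_J B⁻` (at the level of matrices of determinant 1). -/
def inBruhatMinus (n : ℕ) (J : Set (Fin (n-1))) (g : Matrix (Fin n) (Fin n) ℂ) : Prop :=
  ∃ b₁ b₂ : Matrix (Fin n) (Fin n) ℂ,
    b₁.det = 1 ∧ b₂.det = 1 ∧ lowerTri n b₁ ∧ lowerTri n b₂ ∧ g = b₁ * wJ n J * b₂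

lemma blockStart_spec (n : ℕ) (J : Set (Fin (n-1))) (p : Fin n) :
    blockStart n J p ≤ p.1 ∧ ∀ c : ℕ, blockStart n J p ≤ c → c < p.1 → gapMem n J c := by
  have h := Nat.sInf_mem
    (s := {a : ℕ | a ≤ p.1 ∧ ∀ c : ℕ, a ≤ c → c < p.1 → gapMem n J c})
    ⟨p.1, le_refl _, fun c hc1 hc2 => absurd (lt_of_le_of_lt hc1 hc2) (lt_irrefl _)⟩
  exact h

lemma gap_of_mem_block (n : ℕ) (J : Set (Fin (n-1))) (p : Fin n) (c : ℕ)
    (h1 : blockStart n J p ≤ c) (h2 : c < blockEnd n J p) : gapMem n J c := by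
  rcases lt_or_ge c p.1 with h | h
  · exact (blockStart_spec n J p).2 c h1 h
  · exact (blockEnd_mem n J p).2.2 c h h2

lemma bddAbove_end (n : ℕ) (J : Set (Fin (n-1))) (p : Fin n) :
    BddAbove {b : ℕ | b < n ∧ p.1 ≤ b ∧ ∀ c : ℕ, p.1 ≤ c → c < b → gapMem n J c} :=
  ⟨n, fun _ hb => le_of_lt hb.1⟩

lemma block_eq (n : ℕ) (J : Set (Fin (n-1))) (p r : Fin n)
    (h1 : blockStart n J p ≤ r.1) (h2 : r.1 ≤ blockEnd n J p) :
    blockStart n J r = blockStart n J p ∧ blockEnd n J r = blockEnd n J p := by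
  have hsr := blockStart_spec n J r
  have her := blockEnd_mem n J p
  have herr := blockEnd_mem n J r
  have hpb := le_blockEnd n J p
  have hap := blockStart_le n J p
  have hgap := gap_of_mem_block n J p
  constructor
  · have hle : blockStart n J r ≤ blockStart n J p :=
      Nat.sInf_le ⟨h1, fun c hc1 hc2 => hgap c hc1 (lt_of_lt_of_le hc2 h2)⟩
    have harp : blockStart n J r ≤ p.1 := by
      by_contra hcon
      push_neg at hcon
      have hx : blockStart n J r ≤ blockStart n J r - 1 := by
        apply Nat.sInf_le
        refine ⟨by omega, fun c hc1 hc2 => ?_⟩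
        rcases Nat.lt_or_ge c (blockStart n J r) with hc | hc
        · exact hgap c (by omega) (by omega)
        · exact hsr.2 c hc hc2
      omega
    have hge : blockStart n J p ≤ blockStart n J r := by
      apply Nat.sInf_le
      refine ⟨harp, fun c hc1 hc2 => ?_⟩
      rcases Nat.lt_or_ge c r.1 with hc | hc
      · exact hsr.2 c hc1 hc
      · exact hgap c (le_trans h1 hc) (by omega)
    omega
  · have hge : blockEnd n J p ≤ blockEnd n J r :=
      le_csSup (bddAbove_end n J r)
        ⟨blockEnd_lt n J p, h2, fun c hc1 hc2 => hgap c (le_trans h1 hc1) hc2⟩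
    have hrp : p.1 ≤ blockEnd n J r := by
      by_contra hcon
      push_neg at hcon
      have hrb := le_blockEnd n J r
      have hx : blockEnd n J r + 1 ≤ blockEnd n J r := by
        apply le_csSup (bddAbove_end n J r)
        refine ⟨by have := p.isLt; omega, by omega, fun c hc1 hc2 => ?_⟩
        rcases Nat.lt_or_ge c (blockEnd n J r) with hc | hc
        · exact herr.2.2 c hc1 hc
        · exact hgap c (by omega) (by omega)
      omega
    have hle : blockEnd n J r ≤ blockEnd n J p := by
      apply le_csSup (bddAbove_end n J p)
      refine ⟨blockEnd_lt n J r, hrp, fun c hc1 hc2 => ?_⟩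
      rcases Nat.lt_or_ge c r.1 with hc | hc
      · exact hgap c (by omega) (by omega)
      · exact herr.2.2 c hc hc2
    omega

lemma blockEnd_eq_of_start_eq (n : ℕ) (J : Set (Fin (n-1))) (p q : Fin n)
    (h : blockStart n J p = blockStart n J q) : blockEnd n J p = blockEnd n J q := by
  rcases le_total (blockEnd n J p) (blockEnd n J q) with hle | hle
  · exact (block_eq n J q p (by rw [← h]; exact blockStart_le n J p)
      (le_trans (le_blockEnd n J p) hle)).2
  · exact ((block_eq n J p q (by rw [h]; exact blockStart_le n J q)
      (le_trans (le_blockEnd n J q) hle)).2).symm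

lemma start_eq_iff (n : ℕ) (J : Set (Fin (n-1))) (p r : Fin n) :
    blockStart n J r = blockStart n J p ↔
      blockStart n J p ≤ r.1 ∧ r.1 ≤ blockEnd n J p := by
  constructor
  · intro h
    refine ⟨by rw [← h]; exact blockStart_le n J r, ?_⟩
    rw [← blockEnd_eq_of_start_eq n J r p h]
    exact le_blockEnd n J r
  · intro h
    exact (block_eq n J p r h.1 h.2).1

lemma wJ_col (n : ℕ) (J : Set (Fin (n-1))) (r q : Fin n) :
    wJ n J r q = if (r:ℕ) + (q:ℕ) = blockStart n J q + blockEnd n J q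
      then (-1:ℂ) ^ ((r:ℕ) - blockStart n J q) else 0 := by
  unfold wJ
  have har := blockStart_le n J r
  have hbr := le_blockEnd n J r
  have haq := blockStart_le n J q
  have hbq := le_blockEnd n J q
  by_cases h : (r:ℕ) + (q:ℕ) = blockStart n J r + blockEnd n J r
  · obtain ⟨e1, e2⟩ := block_eq n J r q (by omega) (by omega)
    rw [if_pos h, if_pos (by omega), e1]
  · rw [if_neg h]
    by_cases h2 : (r:ℕ) + (q:ℕ) = blockStart n J q + blockEnd n J q
    · exfalso
      obtain ⟨e1, e2⟩ := block_eq n J q r (by omega) (by omega)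
      omega
    · rw [if_neg h2]

lemma wJ_mul_wJ (n : ℕ) (J : Set (Fin (n-1))) :
    wJ n J * wJ n J =
      Matrix.diagonal (fun p : Fin n => (-1:ℂ) ^ (blockEnd n J p - blockStart n J p)) := by
  ext p q
  rw [Matrix.mul_apply]
  have hap := blockStart_le n J p
  have hbp := le_blockEnd n J p
  have hbn := blockEnd_lt n J p
  have hrh : blockStart n J p + blockEnd n J p - p.1 < n := by omega
  rw [Finset.sum_eq_single (⟨blockStart n J p + blockEnd n J p - p.1, hrh⟩ : Fin n)]
  · obtain ⟨e1, e2⟩ := block_eq n J p (⟨blockStart n J p + blockEnd n J p - p.1, hrh⟩ : Fin n)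
      (by simp; omega) (by simp; omega)
    show wJ n J p _ * wJ n J _ q = _
    unfold wJ
    simp only [Fin.val_mk, e1, e2]
    rw [if_pos (by omega)]
    by_cases hpq : q = p
    · subst hpq
      rw [if_pos (by omega), Matrix.diagonal_apply_eq, ← pow_add]
      congr 1
      omega
    · rw [if_neg (by intro hc; apply hpq; apply Fin.ext; omega), mul_zero,
        Matrix.diagonal_apply_ne' _ (by exact fun hc => hpq hc)]
  · intro r _ hr
    show wJ n J p r * wJ n J r q = 0
    unfold wJ
    rw [if_neg, zero_mul]
    intro hc
    apply hr
    apply Fin.ext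
    simp
    omega
  · exact fun h => absurd (Finset.mem_univ _) h

lemma fMat_mul (n : ℕ) (M : Matrix (Fin n) (Fin n) ℂ) (k q : Fin n) :
    (fMat n * M) k q =
      if h : 1 ≤ (k:ℕ) then M ⟨k.1 - 1, by have := k.isLt; omega⟩ q else 0 := by
  rw [Matrix.mul_apply]
  split_ifs with h
  · rw [Finset.sum_eq_single (⟨k.1 - 1, by have := k.isLt; omega⟩ : Fin n)]
    · have : fMat n k ⟨k.1 - 1, by have := k.isLt; omega⟩ = 1 := by
        unfold fMat; rw [if_pos]; simp; omega
      rw [this, one_mul]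
    · intro r _ hr
      unfold fMat
      rw [if_neg, zero_mul]
      intro hc
      apply hr
      apply Fin.ext
      simp
      omega
    · exact fun h => absurd (Finset.mem_univ _) h
  · apply Finset.sum_eq_zero
    intro r _
    unfold fMat
    rw [if_neg (by omega), zero_mul]

lemma g_apply (n : ℕ) (J : Set (Fin (n-1))) (x : Matrix (Fin n) (Fin n) ℂ)
    (c : ℕ → ℕ → ℂ)
    (hcx : ∀ p q : Fin n, x p q =
      if blockStart n J p = blockStart n J q ∧ (q : ℕ) ≤ (p : ℕ)
      then c (blockStart n J p) ((p : ℕ) - (q : ℕ)) else 0)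
    (p q : Fin n) :
    (x * wJ n J) p q =
      (if blockStart n J p = blockStart n J q ∧
          blockStart n J q + blockEnd n J q - (q:ℕ) ≤ (p:ℕ)
        then c (blockStart n J q) ((p:ℕ) - (blockStart n J q + blockEnd n J q - (q:ℕ)))
        else 0) * (-1:ℂ) ^ (blockEnd n J q - (q:ℕ)) := by
  rw [Matrix.mul_apply]
  have haq := blockStart_le n J q
  have hbq := le_blockEnd n J q
  have hbn := blockEnd_lt n J q
  have hqh : blockStart n J q + blockEnd n J q - q.1 < n := by omega
  obtain ⟨e1, e2⟩ := block_eq n J q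
    (⟨blockStart n J q + blockEnd n J q - q.1, hqh⟩ : Fin n) (by simp; omega) (by simp; omega)
  rw [Finset.sum_eq_single (⟨blockStart n J q + blockEnd n J q - q.1, hqh⟩ : Fin n)]
  · rw [wJ_col, if_pos (by simp; omega), hcx]
    simp only [Fin.val_mk, e1]
    by_cases hc1 : blockStart n J p = blockStart n J q
    · by_cases hc2 : blockStart n J q + blockEnd n J q - (q:ℕ) ≤ (p:ℕ)
      · rw [if_pos ⟨hc1, hc2⟩, if_pos ⟨hc1, hc2⟩, hc1]
        congr 2
        omega
      · rw [if_neg (by tauto), if_neg (by tauto), zero_mul]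
        exact (zero_mul _).symm
    · rw [if_neg (by tauto), if_neg (by tauto), zero_mul]
      exact (zero_mul _).symm
  · intro r _ hr
    rw [wJ_col, if_neg, mul_zero]
    intro hc
    apply hr
    apply Fin.ext
    simp
    omega
  · exact fun h => absurd (Finset.mem_univ _) h

lemma g_zero (n : ℕ) (J : Set (Fin (n-1))) (x : Matrix (Fin n) (Fin n) ℂ)
    (c : ℕ → ℕ → ℂ)
    (hcx : ∀ p q : Fin n, x p q =
      if blockStart n J p = blockStart n J q ∧ (q : ℕ) ≤ (p : ℕ)
      then c (blockStart n J p) ((p : ℕ) - (q : ℕ)) else 0)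
    (p q : Fin n) (h : blockStart n J p ≠ blockStart n J q) :
    (x * wJ n J) p q = 0 := by
  rw [g_apply n J x c hcx, if_neg (by tauto), zero_mul]

lemma wJ_det_ne (n : ℕ) (J : Set (Fin (n-1))) : (wJ n J).det ≠ 0 := by
  intro h
  have h2 := congrArg Matrix.det (wJ_mul_wJ n J)
  rw [Matrix.det_mul, h, mul_zero, Matrix.det_diagonal] at h2
  exact (Finset.prod_ne_zero_iff.mpr
    (fun p _ => pow_ne_zero _ (by norm_num : (-1:ℂ) ≠ 0))) h2.symm

lemma ginv_zero (n : ℕ) (J : Set (Fin (n-1))) (x : Matrix (Fin n) (Fin n) ℂ)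
    (c : ℕ → ℕ → ℂ)
    (hcx : ∀ p q : Fin n, x p q =
      if blockStart n J p = blockStart n J q ∧ (q : ℕ) ≤ (p : ℕ)
      then c (blockStart n J p) ((p : ℕ) - (q : ℕ)) else 0)
    (hdg : IsUnit (x * wJ n J).det)
    (p q : Fin n) (h : blockStart n J p ≠ blockStart n J q) :
    (x * wJ n J)⁻¹ p q = 0 := by
  set g := x * wJ n J with hgdef
  set D : Matrix (Fin n) (Fin n) ℂ :=
    Matrix.diagonal (fun r => if blockStart n J r = blockStart n J p then (1:ℂ) else 0)
    with hD
  have hcomm : g * D = D * g := by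
    ext u v
    rw [hD, Matrix.mul_diagonal, Matrix.diagonal_mul]
    by_cases huv : blockStart n J u = blockStart n J v
    · rw [huv, mul_comm]
    · rw [hgdef, g_zero n J x c hcx u v huv, zero_mul, mul_zero]
  have e1 : g * g⁻¹ = 1 := Matrix.mul_nonsing_inv _ hdg
  have e2 : g⁻¹ * g = 1 := Matrix.nonsing_inv_mul _ hdg
  have hinv : g⁻¹ * D = D * g⁻¹ := by
    calc g⁻¹ * D = g⁻¹ * D * (g * g⁻¹) := by rw [e1, mul_one]
    _ = g⁻¹ * (D * g) * g⁻¹ := by simp only [mul_assoc]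
    _ = g⁻¹ * (g * D) * g⁻¹ := by rw [hcomm]
    _ = g⁻¹ * g * (D * g⁻¹) := by simp only [mul_assoc]
    _ = D * g⁻¹ := by rw [e2, one_mul]
  have hent := congrFun (congrFun hinv p) q
  have hL : (g⁻¹ * D) p q = 0 := by
    show (g⁻¹ * D) p q = 0
    rw [hD, Matrix.mul_diagonal, if_neg (fun hc => h hc.symm), mul_zero]
  have hR : (D * g⁻¹) p q = g⁻¹ p q := by
    rw [hD, Matrix.diagonal_mul, if_pos rfl, one_mul]
  show g⁻¹ p q = 0
  rw [← hR]
  show (D * g⁻¹) p q = 0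
  rw [← hent]
  exact hL

lemma key_pos (n : ℕ) (J : Set (Fin (n-1))) (x : Matrix (Fin n) (Fin n) ℂ)
    (c : ℕ → ℕ → ℂ)
    (hcx : ∀ p q : Fin n, x p q =
      if blockStart n J p = blockStart n J q ∧ (q : ℕ) ≤ (p : ℕ)
      then c (blockStart n J p) ((p : ℕ) - (q : ℕ)) else 0)
    (p q k : Fin n) (hpq : (q:ℕ) = (p:ℕ) + 1)
    (hs : blockStart n J p = blockStart n J q)
    (hk : blockStart n J k = blockStart n J p) :
    (fMat n * (x * wJ n J)) k q = -((x * wJ n J) k p) := by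
  have hqE : blockEnd n J q = blockEnd n J p := blockEnd_eq_of_start_eq n J q p hs.symm
  have hqbp : (q:ℕ) ≤ blockEnd n J p := by rw [← hqE]; exact le_blockEnd n J q
  have hap := blockStart_le n J p
  obtain ⟨hak, hkb⟩ := (start_eq_iff n J p k).mp hk
  rw [fMat_mul n (x * wJ n J) k q]
  split_ifs with h1
  · by_cases h2 : blockStart n J p < k.1
    · have hk'lt : k.1 - 1 < n := by have := k.isLt; omega
      have hk' : blockStart n J (⟨k.1 - 1, hk'lt⟩ : Fin n) = blockStart n J p :=
        (start_eq_iff n J p (⟨k.1 - 1, hk'lt⟩ : Fin n)).mpr ⟨by simp; omega, by simp; omega⟩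
      rw [g_apply n J x c hcx, g_apply n J x c hcx,
        show blockStart n J q = blockStart n J p from hs.symm,
        show blockEnd n J q = blockEnd n J p from hqE, hk', hk]
      simp only [Fin.val_mk]
      by_cases h3 : blockStart n J p + blockEnd n J p - q.1 ≤ k.1 - 1
      · have h4 : blockStart n J p + blockEnd n J p - p.1 ≤ k.1 := by omega
        rw [if_pos ⟨trivial, h3⟩, if_pos ⟨trivial, h4⟩]
        have harg : k.1 - 1 - (blockStart n J p + blockEnd n J p - q.1)
            = k.1 - (blockStart n J p + blockEnd n J p - p.1) := by omega
        rw [harg, show blockEnd n J p - p.1 = (blockEnd n J p - q.1) + 1 from by omega,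
          pow_succ]
        ring
      · have h4 : ¬ blockStart n J p + blockEnd n J p - p.1 ≤ k.1 := by omega
        rw [if_neg (fun hc => h3 hc.2), if_neg (fun hc => h4 hc.2)]
        simp
    · have hkeq : k.1 = blockStart n J p := by omega
      have hk'lt : k.1 - 1 < n := by have := k.isLt; omega
      have hne : blockStart n J (⟨k.1 - 1, hk'lt⟩ : Fin n) ≠ blockStart n J q := by
        intro hc
        have h5 := blockStart_le n J (⟨k.1 - 1, hk'lt⟩ : Fin n)
        rw [hc] at h5
        simp only [Fin.val_mk] at h5
        omega
      rw [g_zero n J x c hcx _ _ hne, g_apply n J x c hcx,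
        if_neg (by rintro ⟨-, hle⟩; omega), zero_mul, neg_zero]
  · have hkeq : k.1 = 0 := by omega
    rw [g_apply n J x c hcx, if_neg (by rintro ⟨-, hle⟩; omega), zero_mul, neg_zero]

/-- Lemma: if `x ∈ SL_n(ℂ)` is `J`-Toeplitz then
`q_i(x ẇ_J) = -((x ẇ_J)⁻¹ f (x ẇ_J))_{i,i+1}` equals `1` if `i ∈ J` and `0` if
`i ∉ J`. -/
theorem qfun_of_JToeplitz (n : ℕ) (hn : 2 ≤ n) (J : Set (Fin (n-1)))
    (x : Matrix (Fin n) (Fin n) ℂ) (hdet : x.det = 1) (hx : IsJToeplitz n J x)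
    (i : Fin (n-1)) :
    -(((x * wJ n J)⁻¹ * fMat n * (x * wJ n J))
        (⟨i.1, by have := i.isLt; omega⟩ : Fin n)
        (⟨i.1 + 1, by have := i.isLt; omega⟩ : Fin n))
      = if i ∈ J then 1 else 0 := by
  obtain ⟨c, hc0, hcx⟩ := hx
  have hIlt : (i:ℕ) < n := by have := i.isLt; omega
  have hI1lt : (i:ℕ) + 1 < n := by have := i.isLt; omega
  have hdg : IsUnit (x * wJ n J).det := by
    rw [Matrix.det_mul, hdet, one_mul]
    exact isUnit_iff_ne_zero.mpr (wJ_det_ne n J)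
  have e2 : (x * wJ n J)⁻¹ * (x * wJ n J) = 1 := Matrix.nonsing_inv_mul _ hdg
  show -(((x * wJ n J)⁻¹ * fMat n * (x * wJ n J))
      (⟨i.1, hIlt⟩ : Fin n) (⟨i.1 + 1, hI1lt⟩ : Fin n)) = _
  set I : Fin n := (⟨i.1, hIlt⟩ : Fin n) with hIdef
  set I₁ : Fin n := (⟨i.1 + 1, hI1lt⟩ : Fin n) with hI1def
  have hIv : (I:ℕ) = i.1 := rfl
  have hI1v : (I₁:ℕ) = i.1 + 1 := rfl
  rw [mul_assoc, Matrix.mul_apply]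
  have haI := blockStart_le n J I
  by_cases hiJ : i ∈ J
  · -- i ∈ J
    have hgapi : gapMem n J i.1 := ⟨i.isLt, by simpa using hiJ⟩
    have hb1 : i.1 + 1 ≤ blockEnd n J I := by
      apply le_csSup (bddAbove_end n J I)
      refine ⟨hI1lt, by omega, fun d hd1 hd2 => ?_⟩
      have : d = i.1 := by omega
      subst this
      exact hgapi
    obtain ⟨eS, eE⟩ := block_eq n J I I₁ (by omega) (by rw [hI1v]; omega)
    have hterm : ∀ k : Fin n,
        (x * wJ n J)⁻¹ I k * (fMat n * (x * wJ n J)) k I₁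
          = -((x * wJ n J)⁻¹ I k * (x * wJ n J) k I) := by
      intro k
      by_cases hk : blockStart n J k = blockStart n J I
      · rw [key_pos n J x c hcx I I₁ k rfl eS.symm hk]
        ring
      · rw [ginv_zero n J x c hcx hdg I k (fun hc => hk hc.symm), zero_mul, zero_mul,
          neg_zero]
    rw [Finset.sum_congr rfl (fun k _ => hterm k)]
    rw [Finset.sum_neg_distrib, neg_neg, ← Matrix.mul_apply, e2, Matrix.one_apply_eq,
      if_pos hiJ]
  · -- i ∉ J
    rw [if_neg hiJ, neg_eq_zero]
    apply Finset.sum_eq_zero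
    intro k _
    have haI1 : blockStart n J I₁ = i.1 + 1 := by
      have h1 := blockStart_le n J I₁
      rw [hI1v] at h1
      by_contra hne
      obtain ⟨hlt, hmem⟩ := (blockStart_spec n J I₁).2 i.1 (by omega) (by rw [hI1v]; omega)
      exact hiJ (by simpa using hmem)
    by_cases h1 : 1 ≤ (k:ℕ)
    · rw [fMat_mul n (x * wJ n J) k I₁, dif_pos h1]
      by_cases h2 : (k:ℕ) ≤ i.1 + 1
      · rw [g_zero n J x c hcx _ _ (show blockStart n J
            (⟨k.1 - 1, by have := k.isLt; omega⟩ : Fin n) ≠ blockStart n J I₁ from ?_),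
          mul_zero]
        intro hc
        have h5 := blockStart_le n J (⟨k.1 - 1, by have := k.isLt; omega⟩ : Fin n)
        rw [hc, haI1] at h5
        simp only [Fin.val_mk] at h5
        omega
      · have hka : i.1 + 1 ≤ blockStart n J k := by
          by_contra hcon
          push_neg at hcon
          obtain ⟨hlt, hmem⟩ := (blockStart_spec n J k).2 i.1 (by omega) (by omega)
          exact hiJ (by simpa using hmem)
        rw [ginv_zero n J x c hcx hdg I k (by rw [hIv] at haI; intro hc; omega), zero_mul]
    · rw [fMat_mul n (x * wJ n J) k I₁, dif_neg h1, mul_zero]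

end PetersonPaper
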